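/- Every JSBAF (satisfying the structural restrictions, possibly with infinitely many arguments) has at least one preferred labeling, i.e., a ⊆-maximal (with respect to inclusion of IN-sets) admissible labeling. -/

import Mathlib

namespace JS

inductive Lab : Type
  | IN | OUT | UNDEC
deriving DecidableEq

structure JSBAF (A : Type) where
  att : A → A → Prop
  supp : Set A → A → Prop
  pref : A → A → Prop

variable {A : Type}

/-- Strict arguments: supported by the empty set or only by strict arguments. -/
inductive Strict (J : JSBAF A) : A → Prop
  | mk (S : Set A) (a : A) (h : J.supp S a) (hS : ∀ b ∈ S, Strict J b) : Strict J a

/-- Structural restrictions on JSBAFs. -/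
structure Restr (J : JSBAF A) : Prop where
  finSupp : ∀ S b, J.supp S b → S.Finite
  uniqSupp : ∀ S S' b, J.supp S b → J.supp S' b → S = S'
  acyc : ∀ a, ¬ Relation.TransGen (fun x y => ∃ S, J.supp S y ∧ x ∈ S) a a
  strictUnatt : ∀ a b, Strict J b → ¬ J.att a b
  prefRefl : ∀ a, J.pref a a
  prefTrans : ∀ a b c, J.pref a b → J.pref b c → J.pref a c
  prefTotal : ∀ a b, J.pref a b ∨ J.pref b a
  strictEq : ∀ a b, Strict J a → Strict J b → J.pref a b
  strictTop : ∀ a b, ¬ Strict J a → Strict J b → J.pref a b ∧ ¬ J.pref b a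

def inL (L : A → Lab) : Set A := {a | L a = Lab.IN}
def outL (L : A → Lab) : Set A := {a | L a = Lab.OUT}
def undecL (L : A → Lab) : Set A := {a | L a = Lab.UNDEC}

/-- Definition 2, item 1: legally IN. -/
def legallyIn (J : JSBAF A) (L : A → Lab) (a : A) : Prop :=
  (∀ b, J.att b a → L b = Lab.OUT) ∧
  ∀ S c, J.supp S c → a ∈ S → (∀ b ∈ S, b ≠ a → J.pref a b) →
    (L c = Lab.IN ∨
     (L c = Lab.UNDEC ∧ ∃ b ∈ S, b ≠ a ∧ (L b = Lab.OUT ∨ L b = Lab.UNDEC)) ∨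
     (L c = Lab.OUT ∧
       ((∃ b ∈ S, b ≠ a ∧ L b = Lab.OUT) ∨
        (∃ b₁ ∈ S, ∃ b₂ ∈ S, b₁ ≠ a ∧ b₂ ≠ a ∧ b₁ ≠ b₂ ∧
          L b₁ = Lab.UNDEC ∧ L b₂ = Lab.UNDEC))))

/-- Definition 2, item 2: legally OUT. -/
def legallyOut (J : JSBAF A) (L : A → Lab) (a : A) : Prop :=
  (∃ b, J.att b a ∧ L b = Lab.IN) ∨
  (∃ (n : ℕ) (S : ℕ → Set A) (b : ℕ → A),
    (∀ i ≤ n, J.supp (S i) (b i)) ∧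
    (∀ i < n, b i ∈ S (i + 1)) ∧
    a ∈ S 0 ∧
    (∀ d ∈ S 0, d ≠ a → L d = Lab.IN) ∧
    (∃ c, J.att c (b n) ∧ L c = Lab.IN) ∧
    (∀ i ≤ n, L (b i) = Lab.OUT) ∧
    (∀ i, 1 ≤ i → i ≤ n → ∀ d ∈ S i, d ≠ b (i - 1) → L d = Lab.IN) ∧
    (∀ d ∈ S 0, d ≠ a → J.pref a d))

/-- Admissible labelings. -/
def Admissible (J : JSBAF A) (L : A → Lab) : Prop :=
  (∀ a, L a = Lab.IN → legallyIn J L a) ∧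
  (∀ a, L a = Lab.OUT ↔ legallyOut J L a) ∧
  (∀ a, Strict J a → L a = Lab.IN)

/-- Preferred labelings: maximal admissible w.r.t. inclusion of IN-sets. -/
def Preferred (J : JSBAF A) (L : A → Lab) : Prop :=
  Admissible J L ∧ ∀ L', Admissible J L' → ¬ (inL L ⊂ inL L')

/-- The iterated OUT-sets of the SIM labeling. -/
def simO (J : JSBAF A) : ℕ → Set A
  | 0 => {a | ∃ b, Strict J b ∧ J.att b a}
  | n + 1 => simO J n ∪
      {a | ∃ S c, J.supp S c ∧ a ∈ S ∧ c ∈ simO J n ∧ ∀ d ∈ S, d ≠ a → Strict J d}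

def simIn (J : JSBAF A) : Set A := {a | Strict J a}
def simOut (J : JSBAF A) : Set A := ⋃ n, simO J n

open Classical in
/-- The strict-including-minimal labeling. -/
noncomputable def SIM (J : JSBAF A) : A → Lab := fun a =>
  if Strict J a then Lab.IN else if a ∈ simOut J then Lab.OUT else Lab.UNDEC

/-- The order on labelings. -/
def leL (L₁ L₂ : A → Lab) : Prop := inL L₁ ⊆ inL L₂ ∧ outL L₁ ⊆ outL L₂

end JS


namespace JS

variable {A : Type}

lemma lab_cases (l : Lab) : l = Lab.IN ∨ l = Lab.OUT ∨ l = Lab.UNDEC := by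
  cases l <;> simp

/-- A finite nonempty set has a pref-minimal element. -/
lemma exists_pref_min (J : JSBAF A) (hR : Restr J) {S : Set A} (hS : S.Finite)
    (hne : S.Nonempty) : ∃ d ∈ S, ∀ e ∈ S, J.pref d e := by
  revert hne
  induction S, hS using Set.Finite.induction_on with
  | empty => intro hne; exact absurd hne (by simp)
  | @insert x T hx hT ih =>
    intro _
    rcases T.eq_empty_or_nonempty with h | h
    · subst h
      refine ⟨x, Set.mem_insert _ _, fun e he => ?_⟩
      rcases Set.mem_insert_iff.mp he with rfl | h
      · exact hR.prefRefl _
      · cases h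
    · obtain ⟨d, hd, hmin⟩ := ih h
      rcases hR.prefTotal d x with hdx | hxd
      · refine ⟨d, Set.mem_insert_of_mem _ hd, fun e he => ?_⟩
        rcases Set.mem_insert_iff.mp he with rfl | he
        · exact hdx
        · exact hmin e he
      · refine ⟨x, Set.mem_insert _ _, fun e he => ?_⟩
        rcases Set.mem_insert_iff.mp he with rfl | he
        · exact hR.prefRefl _
        · exact hR.prefTrans x d e hxd (hmin e he)

lemma legallyOut_mono (J : JSBAF A) {L L' : A → Lab}
    (hin : ∀ x, L x = Lab.IN → L' x = Lab.IN)
    (hout : ∀ x, L x = Lab.OUT → L' x = Lab.OUT)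
    {a : A} (h : legallyOut J L a) : legallyOut J L' a := by
  rcases h with ⟨b, hb, hbI⟩ | ⟨n, S, b, h1, h2, h3, h4, h5, h6, h7, h8⟩
  · exact Or.inl ⟨b, hb, hin b hbI⟩
  · exact Or.inr ⟨n, S, b, h1, h2, h3, fun d hd hda => hin d (h4 d hd hda),
      h5.imp (fun c hc => ⟨hc.1, hin c hc.2⟩), fun i hi => hout _ (h6 i hi),
      fun i hi1 hi2 d hd hdb => hin d (h7 i hi1 hi2 d hd hdb), h8⟩

/-- If L, L' are labelings with L' admissible, and the IN-set of L is contained in that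
of L', then every argument legally-OUT-style OUT in L is OUT in L'. -/
lemma out_mono (J : JSBAF A) (hR : Restr J) {L L' : A → Lab}
    (hL : Admissible J L) (hL' : Admissible J L')
    (hin : ∀ x, L x = Lab.IN → L' x = Lab.IN) :
    ∀ a, L a = Lab.OUT → L' a = Lab.OUT := by
  intro a ha
  rcases (hL.2.1 a).mp ha with ⟨b, hb, hbI⟩ | ⟨n, S, b, h1, h2, h3, h4, h5, h6, h7, h8⟩
  · exact (hL'.2.1 a).mpr (Or.inl ⟨b, hb, hin b hbI⟩)
  · have key : ∀ k, ∀ j, j ≤ n → n - k ≤ j → L' (b j) = Lab.OUT := by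
      intro k
      induction k with
      | zero =>
        intro j hj hj'
        have hjn : j = n := le_antisymm hj hj'
        subst hjn
        obtain ⟨c, hc, hcI⟩ := h5
        exact (hL'.2.1 (b j)).mpr (Or.inl ⟨c, hc, hin c hcI⟩)
      | succ k ih =>
        intro j hj hj'
        by_cases hcase : n - k ≤ j
        · exact ih j hj hcase
        have hjk : j + 1 = n - k := by omega
        have hjn : j < n := by omega
        have hIH : ∀ j', j + 1 ≤ j' → j' ≤ n → L' (b j') = Lab.OUT :=
          fun j' h h' => ih j' h' (by omega)
        have hsupp : J.supp (S (j+1)) (b (j+1)) := h1 _ (by omega)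
        have hmem : b j ∈ S (j+1) := h2 j hjn
        have hothers : ∀ d ∈ S (j+1), d ≠ b j → L' d = Lab.IN := by
          intro d hd hdb
          exact hin d (h7 (j+1) (by omega) (by omega) d hd (by simpa using hdb))
        by_cases hpref : ∀ d ∈ S (j+1), d ≠ b j → J.pref (b j) d
        · -- b j is pref-minimal: build a legallyOut chain for b j in L'
          apply (hL'.2.1 (b j)).mpr
          refine Or.inr ⟨n - (j+1), fun i => S (j+1+i), fun i => b (j+1+i),
            ?_, ?_, hmem, hothers, ?_, ?_, ?_, hpref⟩
          · intro i hi; exact h1 _ (by omega)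
          · intro i hi; exact h2 (j+1+i) (by omega)
          · obtain ⟨c, hc, hcI⟩ := h5
            refine ⟨c, ?_, hin c hcI⟩
            show J.att c (b (j+1+(n-(j+1))))
            have he : j+1+(n-(j+1)) = n := by omega
            rw [he]; exact hc
          · intro i hi; exact hIH (j+1+i) (by omega) (by omega)
          · intro i hi1 hi2 d hd hdb
            refine hin d (h7 (j+1+i) (by omega) (by omega) d hd ?_)
            have he : j+1+i-1 = j+1+(i-1) := by omega
            rw [he]; exact hdb
        · -- otherwise use a pref-minimal element d ≠ b j, which is IN
          push_neg at hpref
          obtain ⟨e0, he0, he0b, he0p⟩ := hpref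
          obtain ⟨d, hdS, hdmin⟩ :=
            exists_pref_min J hR (hR.finSupp _ _ hsupp) ⟨b j, hmem⟩
          have hdb : d ≠ b j := by
            rintro rfl; exact he0p (hdmin e0 he0)
          have hdI : L' d = Lab.IN := hothers d hdS hdb
          have hli := (hL'.1 d hdI).2 (S (j+1)) (b (j+1)) hsupp hdS
            (fun e he _ => hdmin e he)
          have hbout : L' (b (j+1)) = Lab.OUT := hIH (j+1) le_rfl (by omega)
          rcases hli with h | h | h
          · rw [hbout] at h; cases h
          · rw [hbout] at h; cases h.1
          · rcases h.2 with ⟨e, heS, hed, heO⟩ | ⟨e₁, hS₁, e₂, hS₂, hne₁, hne₂, hnee, hu₁, hu₂⟩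
            · by_cases hebj : e = b j
              · rw [← hebj]; exact heO
              · rw [hothers e heS hebj] at heO; cases heO
            · have he₁ : e₁ = b j := by
                by_contra hcon
                rw [hothers e₁ hS₁ hcon] at hu₁; cases hu₁
              have he₂ : e₂ = b j := by
                by_contra hcon
                rw [hothers e₂ hS₂ hcon] at hu₂; cases hu₂
              exact absurd (he₁.trans he₂.symm) hnee
    apply (hL'.2.1 a).mpr
    exact Or.inr ⟨n, S, b, h1, h2, h3, fun d hd hda => hin d (h4 d hd hda),
      h5.imp (fun c hc => ⟨hc.1, hin c hc.2⟩),
      fun i hi => key n i hi (by omega),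
      fun i hi1 hi2 d hd hdb => hin d (h7 i hi1 hi2 d hd hdb), h8⟩



lemma sim_in_iff (J : JSBAF A) (a : A) : SIM J a = Lab.IN ↔ Strict J a := by
  unfold SIM; split_ifs with h1 h2 <;> simp_all

lemma sim_out_iff (J : JSBAF A) (a : A) :
    SIM J a = Lab.OUT ↔ (¬ Strict J a ∧ a ∈ simOut J) := by
  unfold SIM; split_ifs with h1 h2 <;> simp_all

lemma simO_nonstrict (J : JSBAF A) (hR : Restr J) :
    ∀ n a, a ∈ simO J n → ¬ Strict J a := by
  intro n
  induction n with
  | zero =>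
    rintro a ⟨b, hb, hatt⟩ ha
    exact hR.strictUnatt b a ha hatt
  | succ n ih =>
    intro a h ha
    rw [simO] at h
    rcases h with h | ⟨S, c, hsupp, haS, hc, hstr⟩
    · exact ih a h ha
    · refine ih c hc (Strict.mk S c hsupp (fun b hb => ?_))
      by_cases hba : b = a
      · subst hba; exact ha
      · exact hstr b hb hba

lemma simO_legallyOut (J : JSBAF A) (hR : Restr J) :
    ∀ n a, a ∈ simO J n → legallyOut J (SIM J) a := by
  intro n
  induction n with
  | zero =>
    rintro a ⟨b, hb, hatt⟩
    exact Or.inl ⟨b, hatt, (sim_in_iff J b).mpr hb⟩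
  | succ n ih =>
    intro a h
    rw [simO] at h
    rcases h with h | ⟨S, c, hsupp, haS, hc, hstr⟩
    · exact ih a h
    · have hna : ¬ Strict J a := by
        refine simO_nonstrict J hR (n+1) a ?_
        rw [simO]; exact Or.inr ⟨S, c, hsupp, haS, hc, hstr⟩
      have hnc : ¬ Strict J c := simO_nonstrict J hR n c hc
      have hcmem : c ∈ simOut J := Set.mem_iUnion.mpr ⟨n, hc⟩
      have hcOut : SIM J c = Lab.OUT := (sim_out_iff J c).mpr ⟨hnc, hcmem⟩
      have hSIN : ∀ d ∈ S, d ≠ a → SIM J d = Lab.IN :=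
        fun d hd hda => (sim_in_iff J d).mpr (hstr d hd hda)
      have hSpref : ∀ d ∈ S, d ≠ a → J.pref a d :=
        fun d hd hda => (hR.strictTop a d hna (hstr d hd hda)).1
      rcases ih c hc with ⟨e, hatt, heI⟩ | ⟨m, S', b', H1, H2, H3, H4, H5, H6, H7, H8⟩
      · exact Or.inr ⟨0, fun _ => S, fun _ => c, fun i _ => hsupp,
          fun i hi => absurd hi (Nat.not_lt_zero i), haS, hSIN, ⟨e, hatt, heI⟩,
          fun i _ => hcOut, fun i hi1 hi0 => absurd (le_trans hi1 hi0) (by omega), hSpref⟩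
      · refine Or.inr ⟨m+1, fun i => match i with | 0 => S | j+1 => S' j,
          fun i => match i with | 0 => c | j+1 => b' j, ?_, ?_, haS, hSIN, H5, ?_, ?_, hSpref⟩
        · intro i hi
          match i with
          | 0 => exact hsupp
          | j+1 => exact H1 j (by omega)
        · intro i hi
          match i with
          | 0 => exact H3
          | j+1 => exact H2 j (by omega)
        · intro i hi
          match i with
          | 0 => exact hcOut
          | j+1 => exact H6 j (by omega)
        · intro i hi1 hi2 d hd hdb
          match i, hi1, hi2, hd, hdb with
          | j+1, hi1, hi2, hd, hdb =>
            match j, hi2, hd, hdb with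
            | 0, hi2, hd, hdb => exact H4 d hd hdb
            | j'+1, hi2, hd, hdb => exact H7 (j'+1) (by omega) (by omega) d hd hdb

lemma sim_admissible (J : JSBAF A) (hR : Restr J) : Admissible J (SIM J) := by
  refine ⟨?_, ?_, fun a ha => (sim_in_iff J a).mpr ha⟩
  · intro a ha
    have hstr := (sim_in_iff J a).mp ha
    constructor
    · intro b hb
      exact absurd hb (hR.strictUnatt b a hstr)
    · intro S c hsupp haS hpref
      have hall : ∀ b ∈ S, Strict J b := by
        intro b hb
        by_cases hba : b = a
        · subst hba; exact hstr
        · by_contra hnb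
          exact (hR.strictTop b a hnb hstr).2 (hpref b hb hba)
      exact Or.inl ((sim_in_iff J c).mpr (Strict.mk S c hsupp hall))
  · intro a
    constructor
    · intro ha
      obtain ⟨hna, hout⟩ := (sim_out_iff J a).mp ha
      obtain ⟨m, hm⟩ := Set.mem_iUnion.mp hout
      exact simO_legallyOut J hR m a hm
    · rintro (⟨b, hatt, hbI⟩ | ⟨n, S, b, H1, H2, H3, H4, H5, H6, H7, H8⟩)
      · have hb : Strict J b := (sim_in_iff J b).mp hbI
        have hna : ¬ Strict J a := fun ha => hR.strictUnatt b a ha hatt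
        exact (sim_out_iff J a).mpr ⟨hna, Set.mem_iUnion.mpr ⟨0, ⟨b, hb, hatt⟩⟩⟩
      · have hb0 : SIM J (b 0) = Lab.OUT := H6 0 (Nat.zero_le n)
        obtain ⟨hnb0, hb0out⟩ := (sim_out_iff J (b 0)).mp hb0
        obtain ⟨m, hm⟩ := Set.mem_iUnion.mp hb0out
        have hstr : ∀ d ∈ S 0, d ≠ a → Strict J d :=
          fun d hd hda => (sim_in_iff J d).mp (H4 d hd hda)
        have hna : ¬ Strict J a := by
          intro ha
          refine hnb0 (Strict.mk (S 0) (b 0) (H1 0 (Nat.zero_le n)) (fun d hd => ?_))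
          by_cases hda : d = a
          · subst hda; exact ha
          · exact hstr d hd hda
        have hmem : a ∈ simO J (m+1) := by
          rw [simO]
          exact Or.inr ⟨S 0, b 0, H1 0 (Nat.zero_le n), H3, hm, hstr⟩
        exact (sim_out_iff J a).mpr ⟨hna, Set.mem_iUnion.mpr ⟨m+1, hmem⟩⟩

end JS
open JS in
/-- Every JSBAF satisfying the structural restrictions (possibly with infinitely
many arguments) has at least one preferred labeling, i.e., an admissible labeling whose IN-set
is ⊆-maximal among IN-sets of admissible labelings. -/
theorem preferred_nonempty {A : Type} (J : JSBAF A) (hR : Restr J) :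
    ∃ L : A → Lab, Admissible J L ∧ ∀ L' : A → Lab, Admissible J L' → ¬ (inL L ⊂ inL L') := by
  classical
  have hsim : Admissible J (SIM J) := sim_admissible J hR
  let Adm := {L : A → Lab // Admissible J L}
  let r : Adm → Adm → Prop := fun L L' => ∀ x, L.1 x = Lab.IN → L'.1 x = Lab.IN
  have hchain : ∀ c : Set Adm, IsChain r c → ∃ ub : Adm, ∀ L ∈ c, r L ub := by
    intro c hc
    rcases c.eq_empty_or_nonempty with rfl | hne
    · exact ⟨⟨SIM J, hsim⟩, by simp⟩
    obtain ⟨L₀, hL₀⟩ := hne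
    have hdir : ∀ L ∈ c, ∀ L' ∈ c,
        (∀ x, (L.1 x = Lab.IN → L'.1 x = Lab.IN) ∧ (L.1 x = Lab.OUT → L'.1 x = Lab.OUT)) ∨
        (∀ x, (L'.1 x = Lab.IN → L.1 x = Lab.IN) ∧ (L'.1 x = Lab.OUT → L.1 x = Lab.OUT)) := by
      intro L hL L' hL'
      by_cases he : L = L'
      · subst he; left; exact fun x => ⟨id, id⟩
      · rcases hc hL hL' he with h | h
        · left; exact fun x => ⟨h x, fun hx => out_mono J hR L.2 L'.2 h x hx⟩
        · right; exact fun x => ⟨h x, fun hx => out_mono J hR L'.2 L.2 h x hx⟩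
    let supL : A → Lab := fun x =>
      if ∃ L ∈ c, L.1 x = Lab.IN then Lab.IN
      else if ∃ L ∈ c, L.1 x = Lab.OUT then Lab.OUT else Lab.UNDEC
    have hconf : ∀ x, (∃ L ∈ c, L.1 x = Lab.IN) → (∃ L ∈ c, L.1 x = Lab.OUT) → False := by
      rintro x ⟨L₁, h₁, hI⟩ ⟨L₂, h₂, hO⟩
      rcases hdir L₁ h₁ L₂ h₂ with h | h
      · rw [(h x).1 hI] at hO; cases hO
      · rw [(h x).2 hO] at hI; cases hI
    have hsupIN : ∀ x, supL x = Lab.IN ↔ ∃ L ∈ c, L.1 x = Lab.IN := by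
      intro x
      simp only [supL]
      split_ifs with h1 h2
      · exact iff_of_true rfl h1
      · exact iff_of_false (by simp) h1
      · exact iff_of_false (by simp) h1
    have hsupO : ∀ x, supL x = Lab.OUT ↔ ∃ L ∈ c, L.1 x = Lab.OUT := by
      intro x
      simp only [supL]
      split_ifs with h1 h2
      · exact iff_of_false (by simp) (fun h => hconf x h1 h)
      · exact iff_of_true rfl h2
      · exact iff_of_false (by simp) h2
    have hmonoIN : ∀ L ∈ c, ∀ x, L.1 x = Lab.IN → supL x = Lab.IN :=
      fun L hL x hx => (hsupIN x).mpr ⟨L, hL, hx⟩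
    have hmonoOUT : ∀ L ∈ c, ∀ x, L.1 x = Lab.OUT → supL x = Lab.OUT :=
      fun L hL x hx => (hsupO x).mpr ⟨L, hL, hx⟩
    have hundec : ∀ x, supL x = Lab.UNDEC → ∀ L ∈ c, L.1 x = Lab.UNDEC := by
      intro x hx L hL
      rcases lab_cases (L.1 x) with h | h | h
      · rw [hmonoIN L hL x h] at hx; cases hx
      · rw [hmonoOUT L hL x h] at hx; cases hx
      · exact h
    have hstep : ∀ L₁ ∈ c, ∀ L₂ ∈ c,
        (∀ x, (L₁.1 x = Lab.IN → L₂.1 x = Lab.IN) ∧ (L₁.1 x = Lab.OUT → L₂.1 x = Lab.OUT)) →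
        ∀ y, L₁.1 y = supL y → L₂.1 y = supL y := by
      intro L₁ h₁ L₂ h₂ h y hy
      rcases lab_cases (supL y) with hY | hY | hY
      · rw [hY]; exact (h y).1 (hy.trans hY)
      · rw [hY]; exact (h y).2 (hy.trans hY)
      · rw [hY]; exact hundec y hY L₂ h₂
    have hagree : ∀ T : Set A, T.Finite → ∃ L ∈ c, ∀ x ∈ T, L.1 x = supL x := by
      intro T hT
      induction T, hT using Set.Finite.induction_on with
      | empty => exact ⟨L₀, hL₀, by simp⟩
      | @insert x T hx hTfin ih =>
        obtain ⟨L₁, hL₁, hTag⟩ := ih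
        have main : ∃ L ∈ c, (∀ y ∈ T, L.1 y = supL y) ∧ L.1 x = supL x := by
          rcases lab_cases (supL x) with hX | hX | hX
          · obtain ⟨L₂, hL₂, hI⟩ := (hsupIN x).mp hX
            rcases hdir L₁ hL₁ L₂ hL₂ with h | h
            · exact ⟨L₂, hL₂, fun y hy => hstep L₁ hL₁ L₂ hL₂ h y (hTag y hy),
                hI.trans hX.symm⟩
            · exact ⟨L₁, hL₁, hTag, ((h x).1 hI).trans hX.symm⟩
          · obtain ⟨L₂, hL₂, hO⟩ := (hsupO x).mp hX
            rcases hdir L₁ hL₁ L₂ hL₂ with h | h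
            · exact ⟨L₂, hL₂, fun y hy => hstep L₁ hL₁ L₂ hL₂ h y (hTag y hy),
                hO.trans hX.symm⟩
            · exact ⟨L₁, hL₁, hTag, ((h x).2 hO).trans hX.symm⟩
          · exact ⟨L₁, hL₁, hTag, (hundec x hX L₁ hL₁).trans hX.symm⟩
        obtain ⟨L₂, hL₂, hTag₂, hxag⟩ := main
        refine ⟨L₂, hL₂, fun y hy => ?_⟩
        rcases Set.mem_insert_iff.mp hy with rfl | hy
        · exact hxag
        · exact hTag₂ y hy
    have hadm : Admissible J supL := by
      refine ⟨?_, ?_, ?_⟩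
      · -- legallyIn for IN-labeled arguments
        intro a ha
        obtain ⟨La, hLa, haI⟩ := (hsupIN a).mp ha
        constructor
        · intro b hb
          exact hmonoOUT La hLa b ((La.2.1 a haI).1 b hb)
        · intro S c' hsupp haS hpref
          have hSfin : (insert c' (insert a S)).Finite :=
            ((hR.finSupp S c' hsupp).insert a).insert c'
          obtain ⟨L₁, hL₁, hAg⟩ := hagree _ hSfin
          have ha1 : L₁.1 a = Lab.IN :=
            (hAg a (by simp)).trans ha
          have hli := (L₁.2.1 a ha1).2 S c' hsupp haS hpref
          have hcc : L₁.1 c' = supL c' := hAg c' (by simp)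
          have hmem : ∀ b ∈ S, L₁.1 b = supL b := fun b hb => hAg b (by simp [hb])
          rcases hli with h | ⟨h, b, hbS, hba, hbl⟩ | ⟨h, hcase⟩
          · exact Or.inl (hcc.symm.trans h)
          · refine Or.inr (Or.inl ⟨hcc.symm.trans h, b, hbS, hba, ?_⟩)
            rcases hbl with h' | h'
            · exact Or.inl ((hmem b hbS).symm.trans h')
            · exact Or.inr ((hmem b hbS).symm.trans h')
          · refine Or.inr (Or.inr ⟨hcc.symm.trans h, ?_⟩)
            rcases hcase with ⟨b, hbS, hba, hbO⟩ | ⟨b₁, h₁, b₂, h₂, hb₁, hb₂, hnee, hu₁, hu₂⟩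
            · exact Or.inl ⟨b, hbS, hba, (hmem b hbS).symm.trans hbO⟩
            · exact Or.inr ⟨b₁, h₁, b₂, h₂, hb₁, hb₂, hnee,
                (hmem b₁ h₁).symm.trans hu₁, (hmem b₂ h₂).symm.trans hu₂⟩
      · -- OUT iff legallyOut
        intro a
        constructor
        · intro ha
          obtain ⟨La, hLa, haO⟩ := (hsupO a).mp ha
          exact legallyOut_mono J (hmonoIN La hLa) (hmonoOUT La hLa) ((La.2.2.1 a).mp haO)
        · rintro (⟨b, hatt, hbI⟩ | ⟨n, S, b, H1, H2, H3, H4, H5, H6, H7, H8⟩)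
          · obtain ⟨L₂, hL₂, hI⟩ := (hsupIN b).mp hbI
            exact hmonoOUT L₂ hL₂ a ((L₂.2.2.1 a).mpr (Or.inl ⟨b, hatt, hI⟩))
          · obtain ⟨cat, hcat, hcatI⟩ := H5
            have hfin : ∀ i ≤ n, (S i).Finite := fun i hi => hR.finSupp _ _ (H1 i hi)
            have hTfin : (insert a (insert cat
                ((⋃ i ∈ Finset.range (n+1), S i) ∪ b '' ↑(Finset.range (n+1))))).Finite := by
              apply Set.Finite.insert
              apply Set.Finite.insert
              apply Set.Finite.union
              · refine Set.Finite.biUnion (Finset.range (n+1)).finite_toSet ?_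
                intro i hi
                refine hfin i ?_
                have : i ≤ n := by simpa using hi
                omega
              · exact Set.Finite.image _ (Finset.range (n+1)).finite_toSet
            obtain ⟨L₁, hL₁, hAg⟩ := hagree _ hTfin
            have hmemS : ∀ i ≤ n, ∀ d ∈ S i, L₁.1 d = supL d := by
              intro i hi d hd
              refine hAg d ?_
              simp only [Set.mem_insert_iff, Set.mem_union, Set.mem_iUnion]
              right; right; left
              exact ⟨i, by simp; omega, hd⟩
            have hmemB : ∀ i ≤ n, L₁.1 (b i) = supL (b i) := by
              intro i hi
              refine hAg (b i) ?_
              simp only [Set.mem_insert_iff, Set.mem_union]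
              right; right; right
              exact ⟨i, by simp; omega, rfl⟩
            have hout1 : legallyOut J L₁.1 a := by
              refine Or.inr ⟨n, S, b, H1, H2, H3,
                fun d hd hda => (hmemS 0 (Nat.zero_le n) d hd).trans (H4 d hd hda),
                ⟨cat, hcat, (hAg cat (by simp)).trans hcatI⟩,
                fun i hi => (hmemB i hi).trans (H6 i hi),
                fun i hi1 hi2 d hd hdb => (hmemS i hi2 d hd).trans (H7 i hi1 hi2 d hd hdb),
                H8⟩
            exact hmonoOUT L₁ hL₁ a ((L₁.2.2.1 a).mpr hout1)
      · intro a hstr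
        exact hmonoIN L₀ hL₀ a (L₀.2.2.2 a hstr)
    exact ⟨⟨supL, hadm⟩, fun L hL x hx => hmonoIN L hL x hx⟩
  obtain ⟨m, hm⟩ := exists_maximal_of_chains_bounded hchain
    (fun {a b c} hab hbc x hx => hbc x (hab x hx))
  refine ⟨m.1, m.2, ?_⟩
  intro L' hL' hsub
  have h1 : r m ⟨L', hL'⟩ := fun x hx => hsub.1 hx
  have h2 := hm ⟨L', hL'⟩ h1
  rw [Set.ssubset_def] at hsub
  exact hsub.2 (fun x hx => h2 x hx)
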